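/- Let p, q be polynomials with p(T²) = T^{deg q} q(T + T^{−1}) and p self-reciprocal. Then all roots of p lie in S¹ ∪ ℝ₊ if and only if all roots of q are real. -/

import Mathlib

open Polynomial

lemma selfrecip_eval_zero_ne {p : Polynomial ℂ} (hp : p ≠ 0)
    (hself : ∀ z : ℂ, z ≠ 0 → z ^ p.natDegree * p.eval z⁻¹ = p.eval z) :
    p.eval 0 ≠ 0 := by
  have hrev : p.reverse = p := by
    apply Polynomial.eq_of_infinite_eval_eq
    apply Set.Infinite.mono (s := {z : ℂ | z ≠ 0})
    · intro z hz
      simp only [Set.mem_setOf_eq] at hz ⊢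
      letI : Invertible (z⁻¹ : ℂ) := invertibleOfNonzero (inv_ne_zero hz)
      have h1 := Polynomial.eval₂_reverse_mul_pow (RingHom.id ℂ) (z⁻¹) p
      rw [invOf_eq_inv, inv_inv] at h1
      have h2 : (p.reverse).eval z * (z⁻¹) ^ p.natDegree = p.eval z⁻¹ := h1
      have h3 := hself z hz
      have hzn : (z : ℂ) ^ p.natDegree ≠ 0 := pow_ne_zero _ hz
      rw [← h3]
      have : z⁻¹ ^ p.natDegree * z ^ p.natDegree = 1 := by
        rw [← mul_pow, inv_mul_cancel₀ hz, one_pow]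
      calc eval z p.reverse = eval z p.reverse * (z⁻¹ ^ p.natDegree * z ^ p.natDegree) := by
            rw [this, mul_one]
        _ = (eval₂ (RingHom.id ℂ) z p.reverse * z⁻¹ ^ p.natDegree) * z ^ p.natDegree := by
            rw [Polynomial.eval]; ring
        _ = eval₂ (RingHom.id ℂ) z⁻¹ p * z ^ p.natDegree := by rw [h1]
        _ = z ^ p.natDegree * eval z⁻¹ p := by rw [Polynomial.eval]; ring
    · have : Set.Infinite {z : ℂ | z ≠ 0} := Set.Finite.infinite_compl (Set.finite_singleton 0)
      simpa [Set.compl_setOf] using this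
  have : p.eval 0 = p.leadingCoeff := by
    conv_lhs => rw [← hrev]
    rw [← Polynomial.coeff_zero_eq_eval_zero, Polynomial.coeff_zero_reverse]
  rw [this]
  exact Polynomial.leadingCoeff_ne_zero.mpr hp

/-- Let `p`, `q` be polynomials with `p(T²) = T^{deg q}·q(T + T⁻¹)` and `p`
self-reciprocal. Then all roots of `p` lie in `S¹ ∪ ℝ₊` if and only if all
roots of `q` are real. -/
theorem roots_circle_union_posReal_iff_roots_real
    (p q : Polynomial ℂ) (hp : p ≠ 0) (hq : q ≠ 0)
    (hself : ∀ z : ℂ, z ≠ 0 → z ^ p.natDegree * p.eval z⁻¹ = p.eval z)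
    (hrep : ∀ z : ℂ, z ≠ 0 → p.eval (z ^ 2) = z ^ q.natDegree * q.eval (z + z⁻¹)) :
    (∀ μ : ℂ, p.IsRoot μ → ‖μ‖ = 1 ∨ (μ.im = 0 ∧ 0 < μ.re)) ↔
      (∀ lam : ℂ, q.IsRoot lam → lam.im = 0) := by
  constructor
  · intro hP lam hlam
    -- find z with z² - lam z + 1 = 0
    obtain ⟨z, hz⟩ := Complex.exists_root (f := C 1 * X ^ 2 + C (-lam) * X + C 1)
      (by rw [Polynomial.degree_quadratic one_ne_zero]; norm_num)
    simp only [IsRoot, eval_add, eval_mul, eval_pow, eval_C, eval_X, one_mul] at hz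
    have hz0 : z ≠ 0 := by
      rintro rfl; simp at hz
    have hsum : z + z⁻¹ = lam := by
      field_simp
      linear_combination hz
    have hroot : p.IsRoot (z ^ 2) := by
      have := hrep z hz0
      rw [hsum, hlam.eq_zero, mul_zero] at this
      exact this
    rcases hP _ hroot with h1 | h2
    · -- |z²| = 1 so |z| = 1, lam = z + conj z real
      have habs : ‖z‖ = 1 := by
        have : ‖z‖ ^ 2 = 1 := by rw [← norm_pow]; exact h1
        nlinarith [norm_nonneg z]
      have hns : Complex.normSq z = 1 := by
        rw [← Complex.sq_norm, habs]; norm_num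
      rw [← hsum]
      simp [Complex.add_im, Complex.inv_im, hns]
    · -- z² real positive: z real
      obtain ⟨him, hre⟩ := h2
      have him' : 2 * z.re * z.im = 0 := by
        have := him
        simp [pow_two, Complex.mul_im] at this
        linarith
      have hy : z.im = 0 := by
        rcases mul_eq_zero.mp him' with h | h
        · rcases mul_eq_zero.mp h with h' | h'
          · norm_num at h'
          · exfalso
            have : (z ^ 2).re = z.re * z.re - z.im * z.im := by
              simp [pow_two, Complex.mul_re]
            rw [this, h'] at hre
            nlinarith
        · exact h
      rw [← hsum]
      simp [Complex.add_im, Complex.inv_im, hy]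
  · intro hQ mu hmu
    have hmu0 : mu ≠ 0 := by
      rintro rfl
      exact selfrecip_eval_zero_ne hp hself hmu
    obtain ⟨z, hz⟩ : ∃ z : ℂ, z ^ 2 = mu := by
      rcases Complex.exists_root (f := X ^ 2 - C mu)
        (by rw [Polynomial.degree_X_pow_sub_C (by norm_num)]; norm_num) with ⟨z, hz⟩
      exact ⟨z, by simpa [IsRoot, sub_eq_zero] using hz⟩
    have hz0 : z ≠ 0 := by rintro rfl; simp at hz; exact hmu0 hz.symm
    have hlam : q.IsRoot (z + z⁻¹) := by
      have h := hrep z hz0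
      rw [hz, hmu.eq_zero] at h
      have hzn : z ^ q.natDegree ≠ 0 := pow_ne_zero _ hz0
      exact (mul_eq_zero.mp h.symm).resolve_left hzn
    have him := hQ _ hlam
    have hns : Complex.normSq z ≠ 0 := fun h => hz0 (Complex.normSq_eq_zero.mp h)
    rw [Complex.add_im, Complex.inv_im] at him
    -- him : z.im + -z.im / normSq z = 0
    have key : z.im * (Complex.normSq z - 1) = 0 := by
      field_simp at him
      nlinarith [him]
    rcases mul_eq_zero.mp key with hy | hn
    · right
      constructor
      · rw [← hz]; simp [pow_two, Complex.mul_im, hy]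
      · have hx : z.re ≠ 0 := by
          intro h; apply hz0; exact Complex.ext h hy
        rw [← hz]
        simp [pow_two, Complex.mul_re, hy]
        positivity
    · left
      have h1 : Complex.normSq z = 1 := by linarith
      rw [← hz, norm_pow, Complex.sq_norm, h1]
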